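/- Let $A \in \mathbb{F}_2^{r_B \times n_B}$ and $D \in \mathbb{F}_2^{r_D \times n_D}$ and identify $\mathbb{F}_2^{n_B} \otimes \mathbb{F}_2^{n_D}$ with $n_B \times n_D$ matrices $e$ over $\mathbb{F}_2$. Let the tensor check be $H(e) = (Ae, eD^T)$. Suppose every nonzero element of $\ker A$ has Hamming weight at least $d_B$ and every nonzero element of $\ker D$ has weight at least $d_D$. If $e$ is such that no column of $e$ lies in $\ker A \setminus \{0\}$ and no row of $e$ lies in $\ker D \setminus \{0\}$, then the number of nonzero columns of $e$ times the number of nonzero rows of $e$ is at least $|e|$, and $|H(e)| \geq (\text{number of nonzero rows of } e) + (\text{number of nonzero columns of } e) \geq 2\sqrt{|e|}$. -/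

import Mathlib

/-- Total Hamming weight (number of nonzero entries) of a matrix over `F₂`. -/
def matWeight {α β : Type*} [Fintype α] [Fintype β]
    (M : Matrix α β (ZMod 2)) : ℕ :=
  (Finset.univ.filter fun p : α × β => M p.1 p.2 ≠ 0).card

lemma rows_le_matWeight {α β : Type*} [Fintype α] [Fintype β]
    (M : Matrix α β (ZMod 2)) :
    (@Finset.filter _ (fun i : α => M i ≠ 0) (fun _ => instDecidableNot) Finset.univ).card ≤ matWeight M := by
  apply Finset.card_le_card_of_surjOn Prod.fst
  intro i hi
  simp only [Finset.coe_filter, Set.mem_setOf_eq, Finset.mem_univ, true_and] at hi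
  obtain ⟨j, hj⟩ := Function.ne_iff.mp hi
  exact ⟨⟨i, j⟩, by simpa [matWeight] using hj, rfl⟩

lemma cols_le_matWeight {α β : Type*} [Fintype α] [Fintype β]
    (M : Matrix α β (ZMod 2)) :
    (@Finset.filter _ (fun j : β => M.transpose j ≠ 0) (fun _ => instDecidableNot) Finset.univ).card ≤ matWeight M := by
  apply Finset.card_le_card_of_surjOn Prod.snd
  intro j hj
  simp only [Finset.coe_filter, Set.mem_setOf_eq, Finset.mem_univ, true_and] at hj
  obtain ⟨i, hi⟩ := Function.ne_iff.mp hj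
  exact ⟨⟨i, j⟩, by simp [matWeight, Matrix.transpose] at hi ⊢; exact hi, rfl⟩

theorem tensor_check_quadratic_soundness
    {rB nB rD nD dB dD : ℕ}
    (A : Matrix (Fin rB) (Fin nB) (ZMod 2))
    (D : Matrix (Fin rD) (Fin nD) (ZMod 2))
    (hA : ∀ b : Fin nB → ZMod 2, A.mulVec b = 0 → b ≠ 0 → dB ≤ hammingNorm b)
    (hD : ∀ d : Fin nD → ZMod 2, D.mulVec d = 0 → d ≠ 0 → dD ≤ hammingNorm d)
    (e : Matrix (Fin nB) (Fin nD) (ZMod 2))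
    (hcolOK : ∀ j, e.transpose j = 0 ∨ A.mulVec (e.transpose j) ≠ 0)
    (hrowOK : ∀ i, e i = 0 ∨ D.mulVec (e i) ≠ 0) :
    matWeight e ≤ (@Finset.filter _ (fun i : Fin nB => e i ≠ 0) (fun _ => instDecidableNot) Finset.univ).card *
        (@Finset.filter _ (fun j : Fin nD => e.transpose j ≠ 0) (fun _ => instDecidableNot) Finset.univ).card ∧
    (@Finset.filter _ (fun i : Fin nB => e i ≠ 0) (fun _ => instDecidableNot) Finset.univ).card +
        (@Finset.filter _ (fun j : Fin nD => e.transpose j ≠ 0) (fun _ => instDecidableNot) Finset.univ).card ≤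
      matWeight (A * e) + matWeight (e * D.transpose) ∧
    2 * Real.sqrt (matWeight e) ≤
      ((@Finset.filter _ (fun i : Fin nB => e i ≠ 0) (fun _ => instDecidableNot) Finset.univ).card +
        (@Finset.filter _ (fun j : Fin nD => e.transpose j ≠ 0) (fun _ => instDecidableNot) Finset.univ).card : ℝ) := by
  set r := (@Finset.filter _ (fun i : Fin nB => e i ≠ 0) (fun _ => instDecidableNot) Finset.univ).card with hr
  set c := (@Finset.filter _ (fun j : Fin nD => e.transpose j ≠ 0) (fun _ => instDecidableNot) Finset.univ).card with hc
  have h1 : matWeight e ≤ r * c := by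
    rw [hr, hc, ← Finset.card_product]
    apply Finset.card_le_card
    intro p hp
    simp only [matWeight, Finset.mem_filter, Finset.mem_univ, true_and,
      Finset.mem_product] at hp ⊢
    exact ⟨Function.ne_iff.mpr ⟨p.2, hp⟩, Function.ne_iff.mpr ⟨p.1, hp⟩⟩
  refine ⟨h1, ?_, ?_⟩
  · have hrow : r ≤ matWeight (e * D.transpose) := by
      rw [hr]
      calc (@Finset.filter _ (fun i : Fin nB => e i ≠ 0) (fun _ => instDecidableNot) Finset.univ).card
          ≤ (@Finset.filter _ (fun i : Fin nB => (e * D.transpose) i ≠ 0) (fun _ => instDecidableNot) Finset.univ).card := by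
            apply Finset.card_le_card
            intro i hi
            simp only [Finset.mem_filter, Finset.mem_univ, true_and] at hi ⊢
            rcases hrowOK i with h | h
            · exact absurd h hi
            · intro hcontra
              apply h
              funext k
              have := congrFun hcontra k
              simp only [Matrix.mul_apply, Matrix.transpose_apply] at this
              simpa [Matrix.mulVec, dotProduct, mul_comm] using this
        _ ≤ matWeight (e * D.transpose) := rows_le_matWeight _
    have hcol : c ≤ matWeight (A * e) := by
      rw [hc]
      calc (@Finset.filter _ (fun j : Fin nD => e.transpose j ≠ 0) (fun _ => instDecidableNot) Finset.univ).card
          ≤ (@Finset.filter _ (fun j : Fin nD => (A * e).transpose j ≠ 0) (fun _ => instDecidableNot) Finset.univ).card := by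
            apply Finset.card_le_card
            intro j hj
            simp only [Finset.mem_filter, Finset.mem_univ, true_and] at hj ⊢
            rcases hcolOK j with h | h
            · exact absurd h hj
            · intro hcontra
              apply h
              funext k
              have := congrFun hcontra k
              simp only [Matrix.transpose_apply, Matrix.mul_apply] at this
              simpa [Matrix.mulVec, dotProduct, Matrix.transpose] using this
        _ ≤ matWeight (A * e) := cols_le_matWeight _
    omega
  · have h2 : (matWeight e : ℝ) ≤ (r : ℝ) * c := by exact_mod_cast h1
    have hrn : (0:ℝ) ≤ r := by positivity
    have hcn : (0:ℝ) ≤ c := by positivity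
    have hs : Real.sqrt (matWeight e) ≤ Real.sqrt ((r:ℝ) * c) :=
      Real.sqrt_le_sqrt h2
    have hsr := Real.sq_sqrt hrn
    have hsc := Real.sq_sqrt hcn
    have hmul : Real.sqrt ((r:ℝ) * c) = Real.sqrt r * Real.sqrt c :=
      Real.sqrt_mul hrn _
    nlinarith [sq_nonneg (Real.sqrt r - Real.sqrt c), Real.sqrt_nonneg ((r:ℝ)*c),
      Real.sqrt_nonneg (matWeight e : ℝ)]
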